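/- If A is a delta functional (A1 = 0, Ax ≠ 0) on K[x], then any polynomial f(x) is uniquely determined by the sequence of values A^k f(x) for k ≥ 0, where A^0 f(x) = f(0): if A^k f = A^k g for all k ≥ 0 then f = g. -/

import Mathlib

open scoped Classical
open Polynomial

noncomputable section

/-- The umbral product of two functionals, defined on monomials by
`LM x^n = ∑_{k=0}^n (n choose k) (L x^k)(M x^{n-k})` and extended linearly. -/
def umbralMul {K : Type*} [Field K] (L M : Polynomial K → K) : Polynomial K → K :=
  fun f => ∑ n ∈ f.support, f.coeff n *
    ∑ k ∈ Finset.range (n + 1), (n.choose k : K) * L (X ^ k) * M (X ^ (n - k))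

/-- Umbral powers of a functional, with `A^0 f = f(0)`. -/
def umbralPow {K : Type*} [Field K] (A : Polynomial K → K) : ℕ → Polynomial K → K
  | 0 => fun f => f.eval 0
  | k + 1 => umbralMul A (umbralPow A k)

lemma umbralMul_X_pow {K : Type*} [Field K] (L M : Polynomial K → K) (n : ℕ) :
    umbralMul L M (X ^ n) =
      ∑ k ∈ Finset.range (n + 1), (n.choose k : K) * L (X ^ k) * M (X ^ (n - k)) := by
  unfold umbralMul
  rw [Polynomial.support_X_pow n, Finset.sum_singleton,
    Polynomial.coeff_X_pow_self, one_mul]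

lemma umbralMul_eq_sum {K : Type*} [Field K] (L M : Polynomial K → K) (f : Polynomial K) :
    umbralMul L M f = ∑ n ∈ f.support, f.coeff n * umbralMul L M (X ^ n) := by
  simp only [umbralMul_X_pow]; rfl

lemma umbralPow_eq_sum_range {K : Type*} [Field K] (A : Polynomial K → K) (k N : ℕ)
    (f : Polynomial K) (hN : f.natDegree < N) :
    umbralPow A k f = ∑ n ∈ Finset.range N, f.coeff n * umbralPow A k (X ^ n) := by
  have hsub : f.support ⊆ Finset.range N := Polynomial.supp_subset_range hN
  have hzero : ∀ n ∈ Finset.range N, n ∉ f.support →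
      f.coeff n * umbralPow A k (X ^ n) = 0 := by
    intro n _ hn
    rw [Polynomial.notMem_support_iff.mp hn, zero_mul]
  cases k with
  | zero =>
    simp only [umbralPow, Polynomial.eval_pow, Polynomial.eval_X]
    rw [Finset.sum_eq_single 0]
    · simp [Polynomial.coeff_zero_eq_eval_zero]
    · intro b _ hb; simp [zero_pow hb]
    · intro h0
      exact absurd (Finset.mem_range.mpr (Nat.pos_of_ne_zero (by omega))) h0
  | succ k =>
    have he : umbralPow A (k + 1) = umbralMul A (umbralPow A k) := rfl
    simp only [he] at hzero ⊢
    rw [umbralMul_eq_sum, Finset.sum_subset hsub hzero]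

lemma umbralPow_sub {K : Type*} [Field K] (A : Polynomial K → K) (k : ℕ)
    (f g : Polynomial K) :
    umbralPow A k (f - g) = umbralPow A k f - umbralPow A k g := by
  set N := (f - g).natDegree + f.natDegree + g.natDegree + 1 with hN
  rw [umbralPow_eq_sum_range A k N f (by omega), umbralPow_eq_sum_range A k N g (by omega),
    umbralPow_eq_sum_range A k N (f - g) (by omega), ← Finset.sum_sub_distrib]
  refine Finset.sum_congr rfl fun n _ => ?_
  rw [Polynomial.coeff_sub, sub_mul]

lemma umbral_vanish {K : Type*} [Field K] [CharZero K] (A : Polynomial K →ₗ[K] K)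
    (hA1 : A 1 = 0) (k : ℕ) :
    (∀ n < k, umbralPow (⇑A) k (X ^ n) = 0) ∧
      umbralPow (⇑A) k (X ^ k) = (k.factorial : K) * (A X) ^ k := by
  induction k with
  | zero =>
    refine ⟨fun n hn => absurd hn (Nat.not_lt_zero n), ?_⟩
    simp [umbralPow]
  | succ k ih =>
    have key : ∀ n, umbralPow (⇑A) (k + 1) (X ^ n) =
        ∑ j ∈ Finset.range (n + 1),
          (n.choose j : K) * A (X ^ j) * umbralPow (⇑A) k (X ^ (n - j)) := fun n =>
      umbralMul_X_pow _ _ n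
    constructor
    · intro n hn
      rw [key]
      apply Finset.sum_eq_zero
      intro j hj
      rcases Nat.eq_zero_or_pos j with h0 | h1
      · subst h0; simp [hA1]
      · have hjn : j ≤ n := Nat.lt_succ_iff.mp (Finset.mem_range.mp hj)
        rw [ih.1 (n - j) (by omega)]; ring
    · rw [key, Finset.sum_eq_single 1]
      · have : k + 1 - 1 = k := rfl
        rw [this, ih.2]
        push_cast [Nat.factorial_succ, Nat.choose_one_right]
        ring_nf
      · intro b hb hb1
        rcases Nat.eq_zero_or_pos b with h0 | h1
        · subst h0; simp [hA1]
        · have hbk : b ≤ k + 1 := Nat.lt_succ_iff.mp (Finset.mem_range.mp hb)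
          rw [ih.1 (k + 1 - b) (by omega)]; ring
      · intro h1
        exact absurd (Finset.mem_range.mpr (by omega)) h1

/-- A polynomial is uniquely determined by the values `A^k f` of the umbral
powers of a delta functional `A` (i.e. `A 1 = 0`, `A X ≠ 0`). -/
theorem deltaFunctional_powers_determine {K : Type*} [Field K] [CharZero K]
    (A : Polynomial K →ₗ[K] K) (hA1 : A 1 = 0) (hAX : A X ≠ 0)
    (f g : Polynomial K) (h : ∀ k : ℕ, umbralPow (⇑A) k f = umbralPow (⇑A) k g) :
    f = g := by
  by_contra hne
  set p := f - g with hp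
  have hp0 : p ≠ 0 := sub_ne_zero.mpr hne
  have hzero : ∀ k, umbralPow (⇑A) k p = 0 := by
    intro k
    rw [hp, umbralPow_sub, h k, sub_self]
  set n := p.natDegree with hn
  have hexp := umbralPow_eq_sum_range (⇑A) n (n + 1) p (Nat.lt_succ_self _)
  rw [hzero n, Finset.sum_eq_single n] at hexp
  · rw [(umbral_vanish A hA1 n).2] at hexp
    have hcoeff : p.coeff n ≠ 0 := Polynomial.leadingCoeff_ne_zero.mpr hp0
    have hfact : (n.factorial : K) ≠ 0 := Nat.cast_ne_zero.mpr n.factorial_ne_zero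
    exact (mul_ne_zero hcoeff (mul_ne_zero hfact (pow_ne_zero n hAX))) hexp.symm
  · intro b hb hbn
    have : b < n := by
      have := Finset.mem_range.mp hb; omega
    rw [(umbral_vanish A hA1 n).1 b this, mul_zero]
  · intro hn1
    exact absurd (Finset.mem_range.mpr (Nat.lt_succ_self _)) hn1
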